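/- If u and v are solutions of y'' + q y = 0 with constant nonzero Wronskian w = u v' − u' v, and m = u² + v² does not vanish, then ψ'(z) = w/(u(z)² + v(z)²) satisfies Kummer's equation q − (ψ')² + (3/4)(ψ''/ψ')² − (1/2)ψ'''/ψ' = 0. -/

import Mathlib

open Set

theorem kummer_of_solutions (a b : ℝ) (q u v : ℝ → ℝ) (w : ℝ)
    (hu : ContDiff ℝ 2 u) (hv : ContDiff ℝ 2 v)
    (hum : ∀ z ∈ Set.Ioo a b, deriv (deriv u) z + q z * u z = 0)
    (hvm : ∀ z ∈ Set.Ioo a b, deriv (deriv v) z + q z * v z = 0)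
    (hw : ∀ z ∈ Set.Ioo a b, u z * deriv v z - deriv u z * v z = w)
    (hw0 : w ≠ 0)
    (hm : ∀ z ∈ Set.Ioo a b, 0 < (u z) ^ 2 + (v z) ^ 2) :
    ∀ z ∈ Set.Ioo a b,
      q z - ((fun x => w / ((u x) ^ 2 + (v x) ^ 2)) z) ^ 2
        + 3 / 4 * (deriv (fun x => w / ((u x) ^ 2 + (v x) ^ 2)) z
            / (w / ((u z) ^ 2 + (v z) ^ 2))) ^ 2
        - 1 / 2 * (deriv (deriv (fun x => w / ((u x) ^ 2 + (v x) ^ 2))) z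
            / (w / ((u z) ^ 2 + (v z) ^ 2))) = 0 := by
  have hu1 : ContDiff ℝ 1 (deriv u) := by
    have := (contDiff_succ_iff_deriv.mp (by norm_num at hu ⊢; exact hu : ContDiff ℝ (1+1) u)).2.2
    exact this
  have hv1 : ContDiff ℝ 1 (deriv v) := by
    have := (contDiff_succ_iff_deriv.mp (by norm_num at hv ⊢; exact hv : ContDiff ℝ (1+1) v)).2.2
    exact this
  have hud : ∀ x, HasDerivAt u (deriv u x) x :=
    fun x => (hu.differentiable (by norm_num) x).hasDerivAt
  have hvd : ∀ x, HasDerivAt v (deriv v x) x :=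
    fun x => (hv.differentiable (by norm_num) x).hasDerivAt
  have hud2 : ∀ x, HasDerivAt (deriv u) (deriv (deriv u) x) x :=
    fun x => (hu1.differentiable (by norm_num) x).hasDerivAt
  have hvd2 : ∀ x, HasDerivAt (deriv v) (deriv (deriv v) x) x :=
    fun x => (hv1.differentiable (by norm_num) x).hasDerivAt
  set m : ℝ → ℝ := fun x => (u x) ^ 2 + (v x) ^ 2 with hmdef
  have hmd : ∀ x, HasDerivAt m (2 * (u x * deriv u x + v x * deriv v x)) x := by
    intro x
    have := ((hud x).pow 2).add ((hvd x).pow 2)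
    exact this.congr_deriv (by norm_num; ring)
  set g : ℝ → ℝ := fun x =>
      -(w * (2 * (u x * deriv u x + v x * deriv v x))) / (m x) ^ 2 with hgdef
  have hfg : ∀ x ∈ Set.Ioo a b, deriv (fun x => w / m x) x = g x := by
    intro x hx
    have hne : m x ≠ 0 := (hm x hx).ne'
    have := ((hasDerivAt_const x w).div (hmd x) hne).deriv
    rw [show deriv (fun x => w / m x) x = _ from this]
    simp [hgdef]
  intro z hz
  have hne : m z ≠ 0 := (hm z hz).ne'
  have hzw := hw z hz
  -- first derivative at z
  have h1 : deriv (fun x => w / m x) z = g z := hfg z hz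
  -- second derivative at z
  have h2 : deriv (deriv (fun x => w / m x)) z = deriv g z := by
    apply Filter.EventuallyEq.deriv_eq
    filter_upwards [isOpen_Ioo.mem_nhds hz] with x hx using hfg x hx
  -- compute deriv g z
  have hh : HasDerivAt (fun x => 2 * (u x * deriv u x + v x * deriv v x))
      (2 * (deriv u z * deriv u z + u z * deriv (deriv u) z
          + (deriv v z * deriv v z + v z * deriv (deriv v) z))) z := by
    have := (((hud z).mul (hud2 z)).add ((hvd z).mul (hvd2 z))).const_mul 2
    exact this
  have hgd : HasDerivAt g
      (((-(w * (2 * (deriv u z * deriv u z + u z * deriv (deriv u) z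
          + (deriv v z * deriv v z + v z * deriv (deriv v) z))))) * (m z) ^ 2
        - (-(w * (2 * (u z * deriv u z + v z * deriv v z))))
          * (2 * (m z) ^ 1 * (2 * (u z * deriv u z + v z * deriv v z))))
        / ((m z) ^ 2) ^ 2) z := by
    exact ((hh.const_mul w).neg).div ((hmd z).pow 2) (pow_ne_zero 2 hne)
  have h3 : deriv g z = (((-(w * (2 * (deriv u z * deriv u z + u z * deriv (deriv u) z
          + (deriv v z * deriv v z + v z * deriv (deriv v) z))))) * (m z) ^ 2
        - (-(w * (2 * (u z * deriv u z + v z * deriv v z))))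
          * (2 * (m z) ^ 1 * (2 * (u z * deriv u z + v z * deriv v z))))
        / ((m z) ^ 2) ^ 2) := hgd.deriv
  have huz : deriv (deriv u) z = -(q z * u z) := by linarith [hum z hz]
  have hvz : deriv (deriv v) z = -(q z * v z) := by linarith [hvm z hz]
  change q z - (fun x => w / m x) z ^ 2 + 3 / 4 * (deriv (fun x => w / m x) z / (w / m z)) ^ 2
    - 1 / 2 * (deriv (deriv fun x => w / m x) z / (w / m z)) = 0
  rw [h1, h2, h3]
  simp only [h1, h2, h3, hgdef, huz, hvz, hmdef]
  have hne' : u z ^ 2 + v z ^ 2 ≠ 0 := hne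
  have hw0' : u z * deriv v z - deriv u z * v z ≠ 0 := by rw [hzw]; exact hw0
  rw [← hzw]
  field_simp
  ring
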